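/- Let H be a vertex-labeled DAG and let u ≠ v be two intermediate vertices with identical predecessor sets, P(u) = P(v), and identical successor sets, S(u) = S(v). Let H' be obtained by merging u and v: the vertex v and all edges incident to v are removed, and the label of u is replaced by c(u) + c(v). Then for every source x and sink y of H, the vertex-labeled path sums agree: J_{H'}(x, y) = J_H(x, y). -/

import Mathlib

open scoped Classical

/-- A path from `s` to `t`: a nonempty sequence of consecutive edges, recorded as the
list of its vertices (at least two of them, consecutive ones related by `R`). -/
def IsPath {α : Type*} (R : α → α → Prop) (s t : α) (p : List α) : Prop :=
  2 ≤ p.length ∧ p.Chain' R ∧ p.head? = some s ∧ p.getLast? = some t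

/-- The vertex-labeled path sum `J(x,y)`: the sum over all paths from `x` to `y` of
the product of the labels of the intermediate (interior) vertices of the path
(an empty sum is `0`). -/
noncomputable def vertexPathSum {α : Type*} (R : α → α → Prop) (lab : α → ℝ)
    (x y : α) : ℝ :=
  ∑' p : {p : List α // IsPath R x y p},
    (((p.1.drop 1).dropLast).map lab).prod

private lemma tsum_subtype_eq_sum_finite {β : Type*} (f : β → ℝ) {s : Set β}
    (hs : s.Finite) : ∑' x : s, f x = ∑ x ∈ hs.toFinset, f x := by
  rw [tsum_subtype]
  rw [tsum_eq_sum (s := hs.toFinset)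
    (by intro b hb; exact Set.indicator_of_notMem (by simpa using hb) f)]
  exact Finset.sum_congr rfl fun b hb => Set.indicator_of_mem (by simpa using hb) f

/-- substitution map -/
private def sb {W : Type*} [DecidableEq W] (u v : W) : W → W :=
  fun w => if w = u then v else w

private lemma sb_self {W : Type*} [DecidableEq W] (u v : W) : sb u v u = v := if_pos rfl

private lemma sb_other {W : Type*} [DecidableEq W] (u v : W) {w : W} (h : w ≠ u) :
    sb u v w = w := if_neg h

private lemma sb_edge {W : Type*} [DecidableEq W] (B : W → W → Bool) (u v : W)
    (huu : B u u = false)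
    (hP : ∀ x, B x u = B x v) (hS : ∀ y, B u y = B v y) :
    ∀ a b, B a b = true → B (sb u v a) (sb u v b) = true := by
  intro a b h
  by_cases hau : a = u
  · by_cases hbu : b = u
    · rw [hau, hbu, huu] at h; exact absurd h (by simp)
    · rw [sb_other u v hbu, hau, sb_self, ← hS b, ← hau]; exact h
  · rw [sb_other u v hau]
    by_cases hbu : b = u
    · rw [hbu, sb_self, ← hP a, ← hbu]; exact h
    · rw [sb_other u v hbu]; exact h

/-- every member of a list of length ≥ 2 with Chain' S has an incident S-edge -/
private lemma incident_of_chain {W : Type*} (S : W → W → Prop) :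
    ∀ (l : List W), l.Chain' S → 2 ≤ l.length → ∀ w ∈ l,
      (∃ b, S w b) ∨ (∃ a, S a w) := by
  intro l
  induction l with
  | nil => intro _ h; simp at h
  | cons a rest ih =>
    intro hc hlen w hw
    cases rest with
    | nil => simp at hlen
    | cons b t =>
      have hab : S a b := (List.isChain_cons_cons.1 hc).1
      rcases List.mem_cons.1 hw with rfl | hw'
      · exact Or.inl ⟨b, hab⟩
      · cases t with
        | nil =>
          have : w = b := by simpa using hw'
          subst this
          exact Or.inr ⟨a, hab⟩
        | cons c t' =>
          exact ih (List.isChain_cons_cons.1 hc).2 (by simp) w hw'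

theorem merging_preserves_path_sums
    {W : Type*} [Fintype W] [DecidableEq W]
    (B : W → W → Bool) (lab : W → ℝ)
    (f : W → ℕ) (hacyc : ∀ a b, B a b = true → f a < f b)
    (u v : W) (huv : u ≠ v)
    (hu : (∃ a, B a u = true) ∧ (∃ b, B u b = true))
    (hv : (∃ a, B a v = true) ∧ (∃ b, B v b = true))
    (hP : ∀ x, B x u = B x v) (hS : ∀ y, B u y = B v y)
    (B' : W → W → Bool) (lab' : W → ℝ)
    (hB' : ∀ x y, B' x y = (B x y && !decide (x = v) && !decide (y = v)))
    (hlab' : ∀ x, lab' x = if x = u then lab u + lab v else lab x) :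
    ∀ x y : W, (∀ a, B a x = false) → (∀ b, B y b = false) →
      vertexPathSum (fun a b => B' a b = true) lab' x y
        = vertexPathSum (fun a b => B a b = true) lab x y := by
  intro x y hx hy
  -- basic facts
  have hne_self : ∀ a, B a a = false := by
    intro a
    cases h : B a a with
    | false => rfl
    | true => exact absurd (hacyc a a h) (lt_irrefl _)
  have hxu : x ≠ u := by
    rintro rfl; obtain ⟨a, ha⟩ := hu.1; rw [hx a] at ha; cases ha
  have hxv : x ≠ v := by
    rintro rfl; obtain ⟨a, ha⟩ := hv.1; rw [hx a] at ha; cases ha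
  have hyu : y ≠ u := by
    rintro rfl; obtain ⟨b, hb⟩ := hu.2; rw [hy b] at hb; cases hb
  have hyv : y ≠ v := by
    rintro rfl; obtain ⟨b, hb⟩ := hv.2; rw [hy b] at hb; cases hb
  -- substitution maps preserve edges
  have hσB : ∀ a b, B a b = true → B (sb u v a) (sb u v b) = true :=
    sb_edge B u v (hne_self u) hP hS
  have hτB : ∀ a b, B a b = true → B (sb v u a) (sb v u b) = true :=
    sb_edge B v u (hne_self v) (fun a => (hP a).symm) (fun b => (hS b).symm)
  have hσu : sb u v u = v := sb_self u v
  have hτv : sb v u v = u := sb_self v u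
  have hσx : sb u v x = x := sb_other u v hxu
  have hσy : sb u v y = y := sb_other u v hyu
  have hτx : sb v u x = x := sb_other v u hxv
  have hτy : sb v u y = y := sb_other v u hyv
  -- paths (over B) have no duplicates
  have nodupP : ∀ p : List W, p.Chain' (fun a b => B a b = true) → p.Nodup := by
    intro p hp
    have h1 : (p.map f).Chain' (· < ·) :=
      (List.isChain_map f).2 (hp.imp fun a b h => hacyc a b h)
    have h2 : (p.map f).Pairwise (· < ·) := List.isChain_iff_pairwise.1 h1
    exact List.Nodup.of_map f (h2.imp ne_of_lt)
  -- chains over B' are chains over B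
  have hchain' : ∀ p : List W, p.Chain' (fun a b => B' a b = true)
      → p.Chain' (fun a b => B a b = true) := by
    intro p hp
    refine hp.imp ?_
    intro a b h
    simp only [hB', Bool.and_eq_true] at h
    exact h.1.1
  -- mapping a path
  have pathmap : ∀ (g : W → W), (∀ a b, B a b = true → B (g a) (g b) = true) →
      g x = x → g y = y → ∀ p, IsPath (fun a b => B a b = true) x y p →
      IsPath (fun a b => B a b = true) x y (p.map g) := by
    rintro g hg hgx hgy p ⟨hl, hc, hh, ht⟩
    refine ⟨by simpa using hl, (List.isChain_map g).2 (hc.imp fun a b h => hg a b h),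
      ?_, ?_⟩
    · rw [List.head?_map, hh]; simp [hgx]
    · rw [List.getLast?_map, ht]; simp [hgy]
  -- a path cannot contain both u and v
  have hexcl : ∀ p : List W, IsPath (fun a b => B a b = true) x y p →
      u ∈ p → v ∈ p → False := by
    intro p hp hup hvp
    have hq : IsPath (fun a b => B a b = true) x y (p.map (sb v u)) :=
      pathmap (sb v u) hτB hτx hτy p hp
    have hnd : (p.map (sb v u)).Nodup := nodupP _ hq.2.1
    obtain ⟨s, t, rfl⟩ := List.append_of_mem hup
    have hτu : sb v u u = u := sb_other v u huv
    rw [List.map_append, List.map_cons, hτu, List.nodup_append] at hnd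
    have hvst : v ∈ s ∨ v ∈ t := by
      rcases List.mem_append.1 hvp with h | h
      · exact Or.inl h
      · rcases List.mem_cons.1 h with h | h
        · exact absurd h.symm huv
        · exact Or.inr h
    rcases hvst with h | h
    · have hu1 : u ∈ s.map (sb v u) := by
        have h2 := List.mem_map_of_mem (f := sb v u) h
        rwa [hτv] at h2
      exact hnd.2.2 u hu1 u (List.mem_cons_self (a := u)) rfl
    · have hu1 : u ∈ t.map (sb v u) := by
        have h2 := List.mem_map_of_mem (f := sb v u) h
        rwa [hτv] at h2
      exact (List.nodup_cons.1 hnd.2.1).1 hu1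
  -- paths over B' avoid v
  have havoid : ∀ p : List W, IsPath (fun a b => B' a b = true) x y p → v ∉ p := by
    intro p hp hvp
    rcases incident_of_chain _ p hp.2.1 hp.1 v hvp with ⟨b, hb⟩ | ⟨a, ha⟩
    · simp [hB'] at hb
    · simp [hB'] at ha
  -- a chain over B whose members avoid v is a chain over B'
  have chain_mem : ∀ l : List W, l.Chain' (fun a b => B a b = true) →
      (∀ w ∈ l, w ≠ v) → l.Chain' (fun a b => B' a b = true) := by
    intro l
    induction l with
    | nil => intro _ _; exact List.isChain_nil
    | cons a t iht =>
      intro hc hm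
      cases t with
      | nil => exact List.isChain_singleton a
      | cons b t2 =>
        unfold List.Chain' at hc ⊢
        rw [List.isChain_cons_cons] at hc ⊢
        refine ⟨?_, iht hc.2 fun w hw => hm w (List.mem_cons_of_mem _ hw)⟩
        show B' a b = true
        rw [hB']
        have h1 : B a b = true := hc.1
        simp [h1, hm a (List.mem_cons_self (a := a)), hm b (by simp)]
  -- finiteness
  have hSfin : {p : List W | IsPath (fun a b => B a b = true) x y p}.Finite := by
    refine (List.finite_length_le W (Fintype.card W)).subset ?_
    intro p hp
    exact (nodupP p hp.2.1).length_le_card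
  have hS'fin : {p : List W | IsPath (fun a b => B' a b = true) x y p}.Finite := by
    refine (List.finite_length_le W (Fintype.card W)).subset ?_
    intro p hp
    exact (nodupP p (hchain' p hp.2.1)).length_le_card
  -- rewrite both sides as finite sums
  have e1 : vertexPathSum (fun a b => B' a b = true) lab' x y
      = ∑ p ∈ hS'fin.toFinset, (((p.drop 1).dropLast).map lab').prod := by
    rw [vertexPathSum]
    exact tsum_subtype_eq_sum_finite
      (fun p => (((p.drop 1).dropLast).map lab').prod) hS'fin
  have e2 : vertexPathSum (fun a b => B a b = true) lab x y
      = ∑ p ∈ hSfin.toFinset, (((p.drop 1).dropLast).map lab).prod := by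
    rw [vertexPathSum]
    exact tsum_subtype_eq_sum_finite
      (fun p => (((p.drop 1).dropLast).map lab).prod) hSfin
  rw [e1, e2]
  -- T' = T filtered to avoid v
  have hT' : hS'fin.toFinset = hSfin.toFinset.filter (fun p => v ∉ p) := by
    ext p
    simp only [Set.Finite.mem_toFinset, Finset.mem_filter, Set.mem_setOf_eq]
    constructor
    · intro h
      exact ⟨⟨h.1, hchain' p h.2.1, h.2.2⟩, havoid p h⟩
    · rintro ⟨⟨hl, hc, hh, ht⟩, hvp⟩
      exact ⟨hl, chain_mem p hc (fun w hw he => hvp (he ▸ hw)), hh, ht⟩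
  rw [hT']
  -- interior lemmas
  have interior_sub : ∀ p : List W, ∀ w ∈ (p.drop 1).dropLast, w ∈ p := by
    intro p w hw
    exact ((List.dropLast_sublist _).trans (List.drop_sublist 1 p)).subset hw
  have interior_nodup : ∀ p : List W, p.Nodup → ((p.drop 1).dropLast).Nodup := by
    intro p hp
    exact ((List.dropLast_sublist _).trans (List.drop_sublist 1 p)).nodup hp
  have interior_mem : ∀ p : List W, IsPath (fun a b => B a b = true) x y p →
      ∀ w ∈ p, w ≠ x → w ≠ y → w ∈ (p.drop 1).dropLast := by
    rintro p ⟨hl, hc, hh, ht⟩ w hw hwx hwy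
    cases p with
    | nil => simp at hh
    | cons a t =>
      have hax : a = x := by simpa using hh
      have hw' : w ∈ t := by
        rcases List.mem_cons.1 hw with h | h
        · exact absurd (h.trans hax) hwx
        · exact h
      have htne : t ≠ [] := by
        intro h; subst h; simp at hl
      have hty : t.getLast htne = y := by
        have h1 : (a :: t).getLast? = some y := ht
        rw [List.getLast?_eq_getLast (l := a :: t) (by simp),
          List.getLast_cons htne] at h1
        exact Option.some_injective _ h1
      show w ∈ t.dropLast
      have hsplit := List.dropLast_append_getLast htne
      rw [← hsplit] at hw'
      rcases List.mem_append.1 hw' with h | h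
      · exact h
      · rw [hty] at h
        simp at h
        exact absurd h hwy
  have interior_map : ∀ (g : W → W) (p : List W),
      ((p.map g).drop 1).dropLast = ((p.drop 1).dropLast).map g := by
    intro g p
    rw [← List.map_drop, List.map_dropLast]
  -- the product-splitting lemma
  have prodsplit : ∀ l : List W, l.Nodup → u ∈ l → v ∉ l →
      (l.map lab').prod = (l.map lab).prod + ((l.map (sb u v)).map lab).prod := by
    intro l
    induction l with
    | nil => intro _ h; simp at h
    | cons a t ih =>
      intro hnd hul hvl
      by_cases hau : u = a
      · rw [← hau]
        have hut' : u ∉ t := by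
          have h := (List.nodup_cons.1 hnd).1
          rwa [← hau] at h
        have h1 : t.map lab' = t.map lab := List.map_congr_left fun w hw => by
          have hwu : w ≠ u := fun h => hut' (h ▸ hw)
          rw [hlab', if_neg hwu]
        have h2 : t.map (sb u v) = t := by
          have h3 : t.map (sb u v) = t.map id :=
            List.map_congr_left fun w hw => sb_other u v (fun h => hut' (h ▸ hw))
          rw [h3, List.map_id]
        simp only [List.map_cons, List.prod_cons, h1, h2, hσu, hlab' u]
        rw [if_pos trivial]
        ring
      · have hut : u ∈ t := by
          rcases List.mem_cons.1 hul with h | h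
          · exact absurd h hau
          · exact h
        have hau' : a ≠ u := fun h => hau h.symm
        have hav : a ≠ v := fun h => hvl (by rw [← h]; exact List.mem_cons_self (a := a) (l := t))
        simp only [List.map_cons, List.prod_cons]
        rw [hlab' a, if_neg hau', sb_other u v hau',
          ih (List.nodup_cons.1 hnd).2 hut (fun h => hvl (List.mem_cons_of_mem _ h))]
        ring
  -- split RHS by v ∈ p
  rw [← Finset.sum_filter_add_sum_filter_not hSfin.toFinset (fun p => v ∈ p)
    (fun p => (((p.drop 1).dropLast).map lab).prod)]
  -- split LHS by u ∈ p
  rw [← Finset.sum_filter_add_sum_filter_not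
    (hSfin.toFinset.filter (fun p => v ∉ p)) (fun p => u ∈ p)
    (fun p => (((p.drop 1).dropLast).map lab').prod)]
  simp only [Finset.filter_filter]
  -- p ∈ T with u ∈ p: split product
  have hA : ∀ p ∈ hSfin.toFinset.filter (fun p => v ∉ p ∧ u ∈ p),
      (((p.drop 1).dropLast).map lab').prod
        = (((p.drop 1).dropLast).map lab).prod
          + ((((p.map (sb u v)).drop 1).dropLast).map lab).prod := by
    intro p hp
    rw [Finset.mem_filter, Set.Finite.mem_toFinset] at hp
    obtain ⟨hpath, hvp, hup⟩ := hp
    rw [interior_map]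
    exact prodsplit _ (interior_nodup p (nodupP p hpath.2.1))
      (interior_mem p hpath u hup (Ne.symm hxu) (Ne.symm hyu))
      (fun h => hvp (interior_sub p v h))
  -- p ∈ T with u ∉ p, v ∉ p: labels agree on the interior
  have hC : ∀ p ∈ hSfin.toFinset.filter (fun p => v ∉ p ∧ ¬ u ∈ p),
      (((p.drop 1).dropLast).map lab').prod
        = (((p.drop 1).dropLast).map lab).prod := by
    intro p hp
    rw [Finset.mem_filter, Set.Finite.mem_toFinset] at hp
    obtain ⟨_, _, hup⟩ := hp
    congr 1
    refine List.map_congr_left fun w hw => ?_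
    have hwu : w ≠ u := fun h => hup (h ▸ interior_sub p w hw)
    rw [hlab', if_neg hwu]
  rw [Finset.sum_congr rfl hA, Finset.sum_congr rfl hC, Finset.sum_add_distrib]
  -- split the RHS sum over v ∉ p by u ∈ p
  rw [← Finset.sum_filter_add_sum_filter_not
    (hSfin.toFinset.filter (fun p => ¬ v ∈ p)) (fun p => u ∈ p)
    (fun p => (((p.drop 1).dropLast).map lab).prod)]
  simp only [Finset.filter_filter]
  -- the bijection between paths through u and paths through v
  have hbij : ∑ p ∈ hSfin.toFinset.filter (fun p => v ∉ p ∧ u ∈ p),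
        ((((p.map (sb u v)).drop 1).dropLast).map lab).prod
      = ∑ q ∈ hSfin.toFinset.filter (fun p => v ∈ p),
        (((q.drop 1).dropLast).map lab).prod := by
    refine Finset.sum_bij' (fun p _ => p.map (sb u v)) (fun q _ => q.map (sb v u))
      ?_ ?_ ?_ ?_ ?_
    · intro p hp
      rw [Finset.mem_filter, Set.Finite.mem_toFinset] at hp ⊢
      obtain ⟨hpath, hvp, hup⟩ := hp
      refine ⟨pathmap _ hσB hσx hσy p hpath, ?_⟩
      have h2 := List.mem_map_of_mem (f := sb u v) hup
      rwa [hσu] at h2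
    · intro q hq
      rw [Finset.mem_filter, Set.Finite.mem_toFinset] at hq ⊢
      obtain ⟨hpath, hvq⟩ := hq
      have huq : u ∉ q := fun h => hexcl q hpath h hvq
      refine ⟨pathmap _ hτB hτx hτy q hpath, ?_, ?_⟩
      · intro h
        obtain ⟨w, hw, hwv⟩ := List.mem_map.1 h
        by_cases hwv' : w = v
        · rw [hwv', hτv] at hwv
          exact huv hwv
        · rw [sb_other v u hwv'] at hwv
          exact hwv' hwv
      · have h2 := List.mem_map_of_mem (f := sb v u) hvq
        rwa [hτv] at h2
    · intro p hp
      rw [Finset.mem_filter, Set.Finite.mem_toFinset] at hp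
      obtain ⟨hpath, hvp, hup⟩ := hp
      show (p.map (sb u v)).map (sb v u) = p
      rw [List.map_map]
      have hcong : ∀ w ∈ p, (sb v u ∘ sb u v) w = id w := by
        intro w hw
        by_cases hwu : w = u
        · show sb v u (sb u v w) = w
          rw [hwu, hσu, hτv]
        · show sb v u (sb u v w) = w
          rw [sb_other u v hwu, sb_other v u (fun h => hvp (h ▸ hw))]
      rw [List.map_congr_left hcong, List.map_id]
    · intro q hq
      rw [Finset.mem_filter, Set.Finite.mem_toFinset] at hq
      obtain ⟨hpath, hvq⟩ := hq
      have huq : u ∉ q := fun h => hexcl q hpath h hvq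
      show (q.map (sb v u)).map (sb u v) = q
      rw [List.map_map]
      have hcong : ∀ w ∈ q, (sb u v ∘ sb v u) w = id w := by
        intro w hw
        by_cases hwv : w = v
        · show sb u v (sb v u w) = w
          rw [hwv, hτv, hσu]
        · show sb u v (sb v u w) = w
          rw [sb_other v u hwv, sb_other u v (fun h => huq (h ▸ hw))]
      rw [List.map_congr_left hcong, List.map_id]
    · intro p hp
      rfl
  rw [hbij]
  ring
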